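/- Let T be a tree, let G be the corresponding symmetric directed graph with positive arc weights, and let C ⊆ F ⊆ V with C nonempty. Let T* be the tree obtained from T by repeatedly deleting leaf vertices that are not customers, and let F* be the set of leaves of T*. Then F* ⊆ C ⊆ F, F* is a pathwise-disjoint cover for C, and every pathwise-disjoint cover for C has size at least |F*|; that is, F* is a minimum-cardinality pathwise-disjoint cover for C. -/

import Mathlib

/-- `IsDiPath A a b p` asserts that the list of vertices `p` is a simple directed
path from `a` to `b` in the directed graph with arc relation `A`. -/
def IsDiPath {V : Type*} (A : V → V → Prop) (a b : V) (p : List V) : Prop :=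
  p.head? = some a ∧ p.getLast? = some b ∧ List.Chain' A p ∧ p.Nodup

/-- The arcs traversed by a path: the list of consecutive pairs of vertices. -/
def pathArcs {V : Type*} (p : List V) : List (V × V) :=
  p.zip p.tail

/-- The total weight of a path: the sum of the weights of its arcs. -/
def pathWeight {V : Type*} (w : V → V → ℝ) (p : List V) : ℝ :=
  ((p.zip p.tail).map fun e => w e.1 e.2).sum

/-- `p` is a shortest (minimum total weight) directed path from `a` to `b`. -/
def IsShortestDiPath {V : Type*} (A : V → V → Prop) (w : V → V → ℝ) (a b : V)
    (p : List V) : Prop :=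
  IsDiPath A a b p ∧ ∀ q, IsDiPath A a b q → pathWeight w p ≤ pathWeight w q

/-- The pair `{f₁, f₂}` covers `c` in a pathwise-disjoint fashion: there are shortest
paths from `c` to `f₁` and from `c` to `f₂` with no common vertex except `c`. -/
def CoversPathwise {V : Type*} (A : V → V → Prop) (w : V → V → ℝ) (c f₁ f₂ : V) : Prop :=
  ∃ p₁ p₂, IsShortestDiPath A w c f₁ p₁ ∧ IsShortestDiPath A w c f₂ p₂ ∧
    ∀ v ∈ p₁, v ∈ p₂ → v = c

/-- The pair `{f₁, f₂}` covers `c` in a setwise-disjoint fashion: no shortest path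
from `c` to `f₁` shares a vertex other than `c` with any shortest path from `c` to `f₂`. -/
def CoversSetwise {V : Type*} (A : V → V → Prop) (w : V → V → ℝ) (c f₁ f₂ : V) : Prop :=
  ∀ p₁ p₂, IsShortestDiPath A w c f₁ p₁ → IsShortestDiPath A w c f₂ p₂ →
    ∀ v ∈ p₁, v ∈ p₂ → v = c

/-- `F'` is a pathwise-disjoint cover for the customers `C` (facilities drawn from `F`). -/
def IsPathwiseCover {V : Type*} (A : V → V → Prop) (w : V → V → ℝ) (C F F' : Set V) : Prop :=
  F' ⊆ F ∧ ∀ c ∈ C, c ∉ F' → ∃ f₁ ∈ F', ∃ f₂ ∈ F', f₁ ≠ f₂ ∧ f₁ ≠ c ∧ f₂ ≠ c ∧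
    CoversPathwise A w c f₁ f₂

/-- `F'` is a setwise-disjoint cover for the customers `C` (facilities drawn from `F`). -/
def IsSetwiseCover {V : Type*} (A : V → V → Prop) (w : V → V → ℝ) (C F F' : Set V) : Prop :=
  F' ⊆ F ∧ ∀ c ∈ C, c ∉ F' → ∃ f₁ ∈ F', ∃ f₂ ∈ F', f₁ ≠ f₂ ∧ f₁ ≠ c ∧ f₂ ≠ c ∧
    CoversSetwise A w c f₁ f₂

/-- One step of the pruning procedure: delete a leaf vertex (a vertex with exactly one
neighbour in the current vertex set) that is not a customer. -/
inductive LeafPruneStep {V : Type*} (G : SimpleGraph V) (C : Set V) : Set V → Set V → Prop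
  | step {S : Set V} {v : V} (hv : v ∈ S) (hvC : v ∉ C)
      (hleaf : {u ∈ S | G.Adj v u}.ncard = 1) :
      LeafPruneStep G C S (S \ {v})

/-- `Vstar` is the vertex set of the residual tree: it is obtained from the full vertex
set by repeatedly deleting non-customer leaves, until no such deletion is possible. -/
def LeafPruned {V : Type*} (G : SimpleGraph V) (C : Set V) (Vstar : Set V) : Prop :=
  Relation.ReflTransGen (LeafPruneStep G C) Set.univ Vstar ∧
    ∀ S, ¬ LeafPruneStep G C Vstar S

namespace TreeCoverAux
variable {V : Type*} {A : V → V → Prop} {a b c x y : V} {p q : List V}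

lemma dipath_ne_nil (h : IsDiPath A a b p) : p ≠ [] := by
  rintro rfl; simp [IsDiPath] at h

lemma head_mem (h : IsDiPath A a b p) : a ∈ p := by
  obtain ⟨h1, _⟩ := h
  exact List.mem_of_mem_head? h1

lemma last_mem (h : IsDiPath A a b p) : b ∈ p := by
  obtain ⟨_, h2, _⟩ := h
  exact List.mem_of_mem_getLast? h2

/-- structure of a dipath: either single vertex or a cons with adjacency -/
lemma dipath_cases (h : IsDiPath A a b p) :
    (a = b ∧ p = [a]) ∨ ∃ u rest, p = a :: u :: rest ∧ A a u ∧
      IsDiPath A u b (u :: rest) ∧ a ∉ (u :: rest) := by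
  obtain ⟨h1, h2, h3, h4⟩ := h
  match p, h1 with
  | [z], h1 =>
    simp at h1 h2; left; simp [h1, h2, h1.symm.trans h2]
  | z :: u :: rest, h1 =>
    simp at h1; subst h1
    right
    refine ⟨u, rest, rfl, (List.isChain_cons_cons.mp h3).1, ⟨rfl, ?_, (List.isChain_cons_cons.mp h3).2, h4.of_cons⟩, (List.nodup_cons.mp h4).1⟩
    · simpa [List.getLast?_cons_cons] using h2

lemma dipath_self (h : IsDiPath A a a p) : p = [a] := by
  rcases dipath_cases h with ⟨_, h⟩ | ⟨u, rest, rfl, _, hd, hna⟩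
  · exact h
  · exact absurd (last_mem hd) hna

lemma dipath_single : IsDiPath A a a [a] := by
  simp [IsDiPath, List.Chain']

/-- prefix of a dipath up to any member is a dipath -/
lemma dipath_prefix (h : IsDiPath A a b p) (hx : x ∈ p) :
    ∃ p₁, IsDiPath A a x p₁ ∧ p₁ <+: p := by
  obtain ⟨n, hn⟩ : ∃ n, p.length ≤ n := ⟨p.length, le_refl _⟩
  induction n generalizing p a b with
  | zero => exact absurd (List.length_eq_zero_iff.mp (Nat.le_zero.mp hn)) (dipath_ne_nil h)
  | succ n ih =>
  rcases dipath_cases h with ⟨rfl, rfl⟩ | ⟨u, rest, rfl, hadj, hd, hna⟩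
  · have hxa : x = a := by simpa using hx
    exact ⟨[a], by rw [hxa]; exact dipath_single, List.prefix_refl _⟩
  · rcases List.mem_cons.mp hx with hxa | hx'
    · exact ⟨[a], by rw [hxa]; exact dipath_single, ⟨u :: rest, rfl⟩⟩
    · obtain ⟨p₁, hp₁, hpre⟩ := ih hd hx' (Nat.le_of_succ_le_succ (by simpa using hn))
      refine ⟨a :: p₁, ⟨?_, ?_, ?_, ?_⟩, List.cons_prefix_cons.mpr ⟨rfl, hpre⟩⟩
      · simp
      · rw [List.getLast?_cons, hp₁.2.1]; rfl
      · rw [List.Chain', List.isChain_cons]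
        refine ⟨?_, hp₁.2.2.1⟩
        intro y hy
        obtain rfl : y = u := by
          have h1 := hp₁.1
          cases p₁ with
          | nil => simp at hy
          | cons w t =>
            obtain ⟨t', ht'⟩ := hpre
            simp at hy h1 ht'
            simp [hy, ← h1, ht'.1]
        exact hadj
      · rw [List.nodup_cons]
        exact ⟨fun hc => hna (hpre.subset hc), hp₁.2.2.2⟩


lemma prefix_head? {l₁ l₂ : List V} (h : l₁ <+: l₂) (hy : l₁.head? = some y) :
    l₂.head? = some y := by
  obtain ⟨t, rfl⟩ := h
  cases l₁ with
  | nil => simp at hy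
  | cons z t' => simpa using hy

lemma dipath_tail {u : V} {rest : List V} (h : IsDiPath A a b (a :: u :: rest)) :
    IsDiPath A u b (u :: rest) := by
  obtain ⟨h1, h2, h3, h4⟩ := h
  exact ⟨by simp, by simpa using h2, (List.isChain_cons_cons.mp h3).2, h4.of_cons⟩

lemma dipath_reverse (hs : ∀ x y, A x y → A y x) (h : IsDiPath A a b p) :
    IsDiPath A b a p.reverse := by
  obtain ⟨h1, h2, h3, h4⟩ := h
  refine ⟨by simpa using h2, by simpa using h1, ?_, List.nodup_reverse.mpr h4⟩
  rw [List.Chain', List.isChain_reverse]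
  exact (show List.IsChain A p from h3).imp fun _ _ hxy => hs _ _ hxy

lemma dipath_append {v : V} (h₁ : IsDiPath A a v p) (h₂ : IsDiPath A v b q)
    (hdisj : ∀ x ∈ p, x ∈ q → x = v) : IsDiPath A a b (p ++ q.tail) := by
  rcases dipath_cases h₂ with ⟨rfl, rfl⟩ | ⟨u, rest, rfl, hadj, hd, hna⟩
  · simpa using h₁
  · refine ⟨?_, ?_, ?_, ?_⟩
    · rw [List.head?_append, h₁.1]; rfl
    · rw [List.getLast?_append]
      have : (u :: rest).getLast? = some b := hd.2.1
      rw [List.tail_cons, this]; rfl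
    · rw [List.tail_cons, List.Chain', List.isChain_append]
      refine ⟨h₁.2.2.1, hd.2.2.1, fun x hx y hy => ?_⟩
      obtain rfl : x = v := by rw [h₁.2.1] at hx; exact Option.some_injective _ hx.symm ▸ rfl
      obtain rfl : y = u := by simpa using hy.symm
      exact hadj
    · rw [List.tail_cons, List.nodup_append]
      refine ⟨h₁.2.2.2, hd.2.2.2, fun x hx y hy hxy => ?_⟩
      subst hxy
      exact hna (hdisj x hx (by simp [hy]) ▸ hy)

section Graph
variable {G : SimpleGraph V}

lemma exists_walk_of_list :
    ∀ (p : List V) (a b : V), p.head? = some a → p.getLast? = some b →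
      List.Chain' G.Adj p → ∃ q : G.Walk a b, q.support = p := by
  intro p
  induction p with
  | nil => intro a b h1; simp at h1
  | cons z rest ih =>
    intro a b h1 h2 h3
    obtain rfl : z = a := by simpa using h1
    cases rest with
    | nil =>
      obtain rfl : z = b := by simpa using h2
      exact ⟨SimpleGraph.Walk.nil, by simp⟩
    | cons u rest' =>
      have hadj : G.Adj z u := (List.isChain_cons_cons.mp h3).1
      obtain ⟨q', hq'⟩ := ih u b (by simp) (by simpa using h2) (List.isChain_cons_cons.mp h3).2
      exact ⟨SimpleGraph.Walk.cons hadj q', by simp [hq']⟩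

lemma dipath_of_walk {a b : V} (q : G.Walk a b) (h : q.IsPath) :
    IsDiPath G.Adj a b q.support := by
  refine ⟨?_, ?_, q.isChain_adj_support, h.support_nodup⟩
  · rw [List.head?_eq_head q.support_ne_nil]
    simp [SimpleGraph.Walk.head_support]
  · rw [List.getLast?_eq_getLast q.support_ne_nil]
    simp [SimpleGraph.Walk.getLast_support]

lemma dipath_to_walk {a b : V} (h : IsDiPath G.Adj a b p) :
    ∃ q : G.Walk a b, q.IsPath ∧ q.support = p := by
  obtain ⟨q, hq⟩ := exists_walk_of_list p a b h.1 h.2.1 h.2.2.1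
  exact ⟨q, by rw [SimpleGraph.Walk.isPath_def, hq]; exact h.2.2.2, hq⟩

lemma dipath_unique (hG : G.IsTree) {a b : V} (h₁ : IsDiPath G.Adj a b p)
    (h₂ : IsDiPath G.Adj a b q) : p = q := by
  obtain ⟨w₁, hw₁, rfl⟩ := dipath_to_walk h₁
  obtain ⟨w₂, hw₂, rfl⟩ := dipath_to_walk h₂
  obtain ⟨w, -, hu⟩ := hG.existsUnique_path a b
  rw [hu w₁ hw₁, hu w₂ hw₂]

lemma exists_dipath (hG : G.IsTree) (a b : V) : ∃ p, IsDiPath G.Adj a b p := by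
  obtain ⟨q, hq, -⟩ := hG.existsUnique_path a b
  exact ⟨q.support, dipath_of_walk q hq⟩

lemma shortest_iff (hG : G.IsTree) {w : V → V → ℝ} {a b : V} :
    IsShortestDiPath G.Adj w a b p ↔ IsDiPath G.Adj a b p := by
  refine ⟨fun h => h.1, fun h => ⟨h, fun q hq => ?_⟩⟩
  rw [dipath_unique hG h hq]

end Graph


section Graph2
variable {G : SimpleGraph V}

/-- two paths out of `v` with different second vertices share only `v` (tree) -/
lemma dipath_diverge (hG : G.IsTree) {v f g : V} (h₁ : IsDiPath G.Adj v f p)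
    (h₂ : IsDiPath G.Adj v g q) (hsnd : p.tail.head? ≠ q.tail.head?) :
    ∀ x ∈ p, x ∈ q → x = v := by
  intro x hxp hxq
  by_contra hxv
  obtain ⟨p₁, hp₁, hpre₁⟩ := dipath_prefix h₁ hxp
  obtain ⟨q₁, hq₁, hqre₁⟩ := dipath_prefix h₂ hxq
  have heq : p₁ = q₁ := dipath_unique hG hp₁ hq₁
  rcases dipath_cases hp₁ with ⟨rfl, -⟩ | ⟨u, rest, hp₁e, -, -, -⟩
  · exact hxv rfl
  rcases dipath_cases hq₁ with ⟨rfl, -⟩ | ⟨u', rest', hq₁e, -, -, -⟩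
  · exact hxv rfl
  apply hsnd
  obtain ⟨t, rfl⟩ := hpre₁
  obtain ⟨t', ht'⟩ := hqre₁
  rw [← ht', hp₁e, ← heq, hp₁e]
  simp

/-- an internal vertex of a dipath has two distinct neighbours on the path -/
lemma internal_two_neighbors {x : V} (h : IsDiPath A a b p) (hx : x ∈ p)
    (hxa : x ≠ a) (hxb : x ≠ b) :
    ∃ y z, y ∈ p ∧ z ∈ p ∧ y ≠ z ∧ A y x ∧ A x z := by
  obtain ⟨s, t, rfl⟩ := List.append_of_mem hx
  have hs : s ≠ [] := by
    rintro rfl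
    exact hxa (show x = a by simpa using h.1)
  have ht : t ≠ [] := by
    rintro rfl
    apply hxb
    have := h.2.1
    rw [List.getLast?_append] at this
    exact (show x = b by simpa using this)
  obtain ⟨h1, h2, h3, h4⟩ := h
  rw [List.Chain', List.isChain_append] at h3
  obtain ⟨hcs, hct, hconn⟩ := h3
  obtain ⟨z, t', rfl⟩ := List.exists_cons_of_ne_nil ht
  have hyx : A (s.getLast hs) x := hconn _ (List.getLast?_eq_getLast hs ▸ rfl) x rfl
  have hxz : A x z := (List.isChain_cons_cons.mp hct).1
  have hdisj := List.disjoint_of_nodup_append h4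
  refine ⟨s.getLast hs, z, ?_, ?_, ?_, hyx, hxz⟩
  · exact List.mem_append_left _ (List.getLast_mem hs)
  · simp
  · intro hc
    exact hdisj (hc ▸ List.getLast_mem hs) (by simp)

variable [Fintype V]

def Conv (G : SimpleGraph V) (S : Set V) : Prop :=
  ∀ a ∈ S, ∀ b ∈ S, ∀ p, IsDiPath G.Adj a b p → ∀ x ∈ p, x ∈ S

lemma LeafPruneStep_preserves {C S S' : Set V} (hstep : LeafPruneStep G C S S')
    (hC : C ⊆ S) (hconv : Conv G S) : C ⊆ S' ∧ Conv G S' := by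
  obtain ⟨hv, hvC, hleaf⟩ := hstep
  constructor
  · intro c hc
    exact ⟨hC hc, fun hcv => hvC (Set.mem_singleton_iff.mp hcv ▸ hc)⟩
  · rename_i v
    intro a ha b hb p hp x hx
    have hxS : x ∈ S := hconv a ha.1 b hb.1 p hp x hx
    refine ⟨hxS, fun hxv => ?_⟩
    obtain rfl : x = v := hxv
    obtain ⟨y, z, hy, hz, hyz, hyx, hxz⟩ :=
      internal_two_neighbors hp hx (fun h => ha.2 (h ▸ rfl)) (fun h => hb.2 (h ▸ rfl))
    have h2 : 1 < {u ∈ S | G.Adj x u}.ncard := by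
      rw [Set.one_lt_ncard (Set.toFinite _)]
      exact ⟨y, ⟨hconv a ha.1 b hb.1 p hp y hy, hyx.symm⟩,
        z, ⟨hconv a ha.1 b hb.1 p hp z hz, hxz⟩, hyz⟩
    omega

lemma pruned_invariant {C S : Set V}
    (h : Relation.ReflTransGen (LeafPruneStep G C) Set.univ S) : C ⊆ S ∧ Conv G S := by
  induction h with
  | refl => exact ⟨fun c _ => trivial, fun _ _ _ _ _ _ _ _ => trivial⟩
  | tail _ hstep ih => exact LeafPruneStep_preserves hstep ih.1 ih.2

lemma exists_neighbor_in (hG : G.IsTree) {S : Set V} (hconv : Conv G S)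
    {a b : V} (ha : a ∈ S) (hb : b ∈ S) (hab : a ≠ b) : ∃ u ∈ S, G.Adj a u := by
  obtain ⟨p, hp⟩ := exists_dipath hG a b
  rcases dipath_cases hp with ⟨rfl, -⟩ | ⟨u, rest, he, hadj, -, -⟩
  · exact absurd rfl hab
  · exact ⟨u, hconv a ha b hb p hp u (by rw [he]; simp), hadj⟩

end Graph2


section Graph3
variable {G : SimpleGraph V} [Fintype V]

lemma extend_step (hG : G.IsTree) {S : Set V} {c u f : V}
    (hp : IsDiPath G.Adj c f p) (hsub : ∀ x ∈ p, x ∈ S)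
    (hsnd : p.tail.head? = some u)
    (hbig : 1 < {y ∈ S | G.Adj f y}.ncard) :
    ∃ f' p', IsDiPath G.Adj c f' p' ∧ p'.tail.head? = some u ∧
      (∀ x ∈ p', x ∈ S) ∧ p'.length = p.length + 1 := by
  have hpne : p ≠ [] := dipath_ne_nil hp
  have htne : p.tail ≠ [] := by
    intro h; rw [h] at hsnd; simp at hsnd
  have hlast : p.getLast hpne = f := by
    have := hp.2.1
    rw [List.getLast?_eq_getLast hpne] at this
    exact Option.some_injective _ this
  have hlen2 : 2 ≤ p.length := by
    cases p with
    | nil => exact absurd rfl hpne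
    | cons z t =>
      cases t with
      | nil => exact absurd rfl htne
      | cons w t' => simp
  have hdne : p.dropLast ≠ [] := by
    intro h
    have := congrArg List.length h
    rw [List.length_dropLast] at this
    simp at this
    omega
  set pred := p.dropLast.getLast hdne with hpreddef
  have hdecomp : p.dropLast ++ [f] = p := by
    rw [← hlast]; exact List.dropLast_concat_getLast hpne
  have hpredf : G.Adj pred f := by
    have hch := hp.2.2.1
    rw [← hdecomp, List.Chain', List.isChain_append] at hch
    exact hch.2.2 pred (by rw [List.getLast?_eq_getLast hdne]; rfl) f rfl
  have hpredp : pred ∈ p := by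
    rw [← hdecomp]
    exact List.mem_append_left _ (List.getLast_mem hdne)
  -- pick a neighbour y of f in S different from pred
  obtain ⟨y₁, hy₁, y₂, hy₂, hyy⟩ := (Set.one_lt_ncard (Set.toFinite _)).mp hbig
  obtain ⟨y, hyN, hypred⟩ : ∃ y, y ∈ {y ∈ S | G.Adj f y} ∧ y ≠ pred := by
    by_cases h : y₁ = pred
    · exact ⟨y₂, hy₂, fun hc => hyy (h ▸ hc ▸ rfl)⟩
    · exact ⟨y₁, hy₁, h⟩
  have hyf : G.Adj f y := hyN.2
  have hynp : y ∉ p := by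
    intro hy
    obtain ⟨sl, tl, hpe⟩ := List.append_of_mem hy
    have d₁ : IsDiPath G.Adj y f (y :: tl) := by
      refine ⟨by simp, ?_, ?_, ?_⟩
      · have := hp.2.1
        rw [hpe, List.getLast?_append] at this
        cases htl : (y :: tl).getLast? with
        | none => simp at htl
        | some z => rw [htl] at this; simpa using this
      · have := hp.2.2.1
        rw [hpe, List.Chain', List.isChain_append] at this
        exact this.2.1
      · have := hp.2.2.2
        rw [hpe] at this
        exact this.of_append_right
    have d₂ : IsDiPath G.Adj y f [y, f] := by
      refine ⟨by simp, by simp, by simp [List.Chain', hyf.symm], by simp [hyf.ne']⟩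
    have := dipath_unique hG d₁ d₂
    have htl2 : tl = [f] := by simpa using this
    apply hypred
    rw [hpreddef]
    have : p.dropLast = sl ++ [y] := by
      rw [hpe, htl2]
      rw [show sl ++ [y, f] = (sl ++ [y]) ++ [f] by simp]
      rw [List.dropLast_concat]
    simp [this]
  have d₃ : IsDiPath G.Adj f y [f, y] :=
    ⟨by simp, by simp, by simp [List.Chain', hyf], by simp [hyf.ne]⟩
  refine ⟨y, p ++ [y], ?_, ?_, ?_, by simp⟩
  · have := dipath_append hp d₃ (fun x hx hx' => by
      rcases by simpa using hx' with rfl | rfl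
      · rfl
      · exact absurd hx hynp)
    simpa using this
  · rw [List.tail_append_of_ne_nil hpne, List.head?_append, hsnd]; rfl
  · intro x hx
    rcases List.mem_append.mp hx with h | h
    · exact hsub x h
    · rw [List.mem_singleton.mp h]; exact hyN.1

lemma reach_leaf (hG : G.IsTree) {S : Set V} {c u : V}
    (hc : c ∈ S) (hu : u ∈ S) (hadj : G.Adj c u) :
    ∃ f pf, IsDiPath G.Adj c f pf ∧ pf.tail.head? = some u ∧
      (∀ x ∈ pf, x ∈ S) ∧ f ∈ S ∧ {y ∈ S | G.Adj f y}.ncard ≤ 1 := by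
  suffices h : ∀ (k : ℕ) (p : List V) (f : V), Fintype.card V ≤ p.length + k →
      IsDiPath G.Adj c f p → p.tail.head? = some u → (∀ x ∈ p, x ∈ S) →
      ∃ f' pf, IsDiPath G.Adj c f' pf ∧ pf.tail.head? = some u ∧
        (∀ x ∈ pf, x ∈ S) ∧ f' ∈ S ∧ {y ∈ S | G.Adj f' y}.ncard ≤ 1 by
    refine h (Fintype.card V) [c, u] u (by simp) ?_ (by simp)
      (fun x hx => by rcases by simpa using hx with rfl | rfl <;> assumption)
    exact ⟨by simp, by simp, by simp [List.Chain', hadj], by simp [hadj.ne]⟩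
  intro k
  induction k with
  | zero =>
    intro p f hlen hp hsnd hsub
    by_cases hle : {y ∈ S | G.Adj f y}.ncard ≤ 1
    · exact ⟨f, p, hp, hsnd, hsub, hsub f (last_mem hp), hle⟩
    · exfalso
      obtain ⟨f', p', hp', -, -, hlen'⟩ := extend_step hG hp hsub hsnd (by omega)
      have := hp'.2.2.2.length_le_card
      have := hp.2.2.2.length_le_card
      omega
  | succ k ih =>
    intro p f hlen hp hsnd hsub
    by_cases hle : {y ∈ S | G.Adj f y}.ncard ≤ 1
    · exact ⟨f, p, hp, hsnd, hsub, hsub f (last_mem hp), hle⟩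
    · obtain ⟨f', p', hp', hsnd', hsub', hlen'⟩ := extend_step hG hp hsub hsnd (by omega)
      exact ih p' f' (by omega) hp' hsnd' hsub'

end Graph3


section Graph4
variable {G : SimpleGraph V} [Fintype V]

/-- if a path leaves a convex set `S` immediately (second vertex outside `S`),
it never returns to `S` -/
lemma branch_path_avoids (hG : G.IsTree) {S : Set V} (hconv : Conv G S) {f y a : V}
    (hf : f ∈ S) (hp : IsDiPath G.Adj f y p) (hsnd : p.tail.head? = some a)
    (haS : a ∉ S) : ∀ x ∈ p, x ∈ S → x = f := by
  intro x hx hxS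
  by_contra hxf
  obtain ⟨p₁, hp₁, hpre⟩ := dipath_prefix hp hx
  rcases dipath_cases hp₁ with ⟨rfl, -⟩ | ⟨v', rest, hp₁e, -, -, -⟩
  · exact hxf rfl
  have hsnd₁ : p.tail.head? = some v' := by
    obtain ⟨t, rfl⟩ := hpre
    rw [hp₁e]
    simp
  have hv'a : v' = a := by
    rw [hsnd₁] at hsnd
    simpa using hsnd
  apply haS
  rw [← hv'a]
  exact hconv f hf x hxS p₁ hp₁ v' (by rw [hp₁e]; simp)

/-- gate uniqueness: a vertex outside the convex set cannot have paths to two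
distinct vertices of `S` both avoiding `S` -/
lemma gate_unique (hG : G.IsTree) {S : Set V} (hconv : Conv G S) {f g : V}
    (hf : f ∈ S) (hg : g ∈ S) (hfg : f ≠ g) {y : V} {α β : List V}
    (hα : IsDiPath G.Adj y f α) (hβ : IsDiPath G.Adj y g β)
    (hαS : ∀ x ∈ α, x ∈ S → x = f) (hβS : ∀ x ∈ β, x ∈ S → x = g) : False := by
  have hsymm : ∀ x z : V, G.Adj x z → G.Adj z x := fun _ _ h => h.symm
  obtain ⟨n, hn⟩ : ∃ n, α.length ≤ n := ⟨α.length, le_refl _⟩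
  induction n generalizing y α β with
  | zero => exact dipath_ne_nil hα (List.length_eq_zero_iff.mp (Nat.le_zero.mp hn))
  | succ n ih =>
    have hyS : y ∉ S := by
      intro hyS
      have h1 : y = f := hαS y (head_mem hα) hyS
      have h2 : y = g := hβS y (head_mem hβ) hyS
      exact hfg (h1 ▸ h2)
    have hyf : y ≠ f := fun h => hyS (h ▸ hf)
    have hyg : y ≠ g := fun h => hyS (h ▸ hg)
    rcases dipath_cases hα with ⟨rfl, -⟩ | ⟨a, restα, hαe, hadja, hda, hnaa⟩
    · exact hyf rfl
    rcases dipath_cases hβ with ⟨rfl, -⟩ | ⟨b, restβ, hβe, hadjb, hdb, hnab⟩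
    · exact hyg rfl
    by_cases hab : a = b
    · subst hab
      refine ih hda hdb (fun x hx hxS => hαS x (by rw [hαe]; simp [hx]) hxS)
        (fun x hx hxS => hβS x (by rw [hβe]; simp [hx]) hxS) ?_
      have hl := congrArg List.length hαe
      simp at hl
      simp only [List.length_cons]
      omega
    · have hdisj : ∀ x ∈ α, x ∈ β → x = y := by
        apply dipath_diverge hG hα hβ
        rw [hαe, hβe]
        simpa using hab
      have hrev : IsDiPath G.Adj f y α.reverse := dipath_reverse hsymm hα
      have hcat : IsDiPath G.Adj f g (α.reverse ++ β.tail) :=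
        dipath_append hrev hβ (fun x hx hx' => hdisj x (List.mem_reverse.mp hx) hx')
      have : y ∈ S := hconv f hf g hg _ hcat y
        (List.mem_append_left _ (List.mem_reverse.mpr (head_mem hα)))
      exact hyS this

end Graph4


end TreeCoverAux

open TreeCoverAux

/-- For a tree (viewed as a symmetric positively-weighted digraph)
with ∅ ≠ C ⊆ F, the set `F*` of leaves (vertices with at most one neighbour) of the
residual tree obtained by pruning non-customer leaves satisfies: `F* ⊆ C`, `F*` is a
pathwise-disjoint cover for `C`, and every pathwise-disjoint cover for `C` has size
at least `|F*|`. -/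
theorem tree_pruned_leaves_optimal_pathwise_cover
    {V : Type*} [Fintype V] (G : SimpleGraph V) (hG : G.IsTree)
    (w : V → V → ℝ) (hw : ∀ x y, G.Adj x y → 0 < w x y)
    (C F : Set V) (hCF : C ⊆ F) (hC : C.Nonempty)
    (Vstar : Set V) (hVstar : LeafPruned G C Vstar)
    (Fstar : Set V)
    (hFstar : Fstar = {v ∈ Vstar | {u ∈ Vstar | G.Adj v u}.ncard ≤ 1}) :
    Fstar ⊆ C ∧ IsPathwiseCover G.Adj w C F Fstar ∧
      ∀ F', IsPathwiseCover G.Adj w C F F' → Fstar.ncard ≤ F'.ncard := by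
  obtain ⟨hreach, hmax⟩ := hVstar
  obtain ⟨hCV, hconv⟩ := pruned_invariant hreach
  have hsymm : ∀ x z : V, G.Adj x z → G.Adj z x := fun _ _ h => h.symm
  -- Part 1 : Fstar ⊆ C
  have hFC : Fstar ⊆ C := by
    intro v hv
    rw [hFstar] at hv
    obtain ⟨hvV, hvle⟩ := hv
    by_contra hvC
    obtain ⟨c0, hc0⟩ := hC
    have hc0V : c0 ∈ Vstar := hCV hc0
    have hne : v ≠ c0 := fun h => hvC (h ▸ hc0)
    obtain ⟨u, huV, hadj⟩ := exists_neighbor_in hG hconv hvV hc0V hne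
    have hpos : 0 < {u ∈ Vstar | G.Adj v u}.ncard := by
      rw [Set.ncard_pos (Set.toFinite _)]
      exact ⟨u, huV, hadj⟩
    have h1 : {u ∈ Vstar | G.Adj v u}.ncard = 1 := by omega
    exact hmax _ (LeafPruneStep.step hvV hvC h1)
  refine ⟨hFC, ?_, ?_⟩
  -- Part 2 : Fstar is a pathwise cover
  · refine ⟨fun x hx => hCF (hFC hx), ?_⟩
    intro c hc hcF
    have hcV : c ∈ Vstar := hCV hc
    have h2 : 1 < {u ∈ Vstar | G.Adj c u}.ncard := by
      rw [hFstar] at hcF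
      simp only [Set.mem_setOf_eq, not_and, not_le] at hcF
      exact hcF hcV
    obtain ⟨u₁, hu₁, u₂, hu₂, h12⟩ := (Set.one_lt_ncard (Set.toFinite _)).mp h2
    obtain ⟨f₁, p₁, hp₁, hs₁, hsub₁, hf₁V, hf₁le⟩ := reach_leaf hG hcV hu₁.1 hu₁.2
    obtain ⟨f₂, p₂, hp₂, hs₂, hsub₂, hf₂V, hf₂le⟩ := reach_leaf hG hcV hu₂.1 hu₂.2
    have hdisj : ∀ x ∈ p₁, x ∈ p₂ → x = c := by
      apply dipath_diverge hG hp₁ hp₂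
      rw [hs₁, hs₂]
      simpa using h12
    have hf₁c : f₁ ≠ c := by
      intro h
      rw [h] at hp₁
      rw [dipath_self hp₁] at hs₁
      simp at hs₁
    have hf₂c : f₂ ≠ c := by
      intro h
      rw [h] at hp₂
      rw [dipath_self hp₂] at hs₂
      simp at hs₂
    have hf12 : f₁ ≠ f₂ := fun h => hf₁c (hdisj f₁ (last_mem hp₁) (h ▸ last_mem hp₂))
    refine ⟨f₁, by rw [hFstar]; exact ⟨hf₁V, hf₁le⟩, f₂, by rw [hFstar]; exact ⟨hf₂V, hf₂le⟩,
      hf12, hf₁c, hf₂c, p₁, p₂, (shortest_iff hG).mpr hp₁, (shortest_iff hG).mpr hp₂, hdisj⟩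
  -- Part 3 : minimality
  · intro F' hF'
    have hsel : ∀ f : V, ∃ y : V, f ∈ Fstar → y ∈ F' ∧
        ∃ p, IsDiPath G.Adj f y p ∧ ∀ x ∈ p, x ∈ Vstar → x = f := by
      intro f
      by_cases hfF : f ∈ Fstar
      · have hfV : f ∈ Vstar := by rw [hFstar] at hfF; exact hfF.1
        have hfle : {u ∈ Vstar | G.Adj f u}.ncard ≤ 1 := by
          rw [hFstar] at hfF; exact hfF.2
        by_cases hf' : f ∈ F'
        · exact ⟨f, fun _ => ⟨hf', [f], dipath_single, fun x hx _ => by simpa using hx⟩⟩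
        · obtain ⟨f₁, hf₁, f₂, hf₂, h12, h1f, h2f, q₁, q₂, hs₁, hs₂, hdisj⟩ :=
            hF'.2 f (hFC hfF) hf'
          have hq₁ : IsDiPath G.Adj f f₁ q₁ := hs₁.1
          have hq₂ : IsDiPath G.Adj f f₂ q₂ := hs₂.1
          rcases dipath_cases hq₁ with ⟨rfl, -⟩ | ⟨a₁, rest₁, he₁, hadj₁, -, hna₁⟩
          · exact absurd rfl h1f.symm
          rcases dipath_cases hq₂ with ⟨rfl, -⟩ | ⟨a₂, rest₂, he₂, hadj₂, -, hna₂⟩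
          · exact absurd rfl h2f.symm
          have ha12 : a₁ ≠ a₂ := by
            intro h
            have hm₁ : a₁ ∈ q₁ := by rw [he₁]; simp
            have hm₂ : a₁ ∈ q₂ := by rw [he₂, h]; simp
            exact hna₁ ((hdisj a₁ hm₁ hm₂) ▸ by simp)
          have hone : a₁ ∉ Vstar ∨ a₂ ∉ Vstar := by
            by_contra hboth
            push_neg at hboth
            have : 1 < {u ∈ Vstar | G.Adj f u}.ncard := by
              rw [Set.one_lt_ncard (Set.toFinite _)]
              exact ⟨a₁, ⟨hboth.1, hadj₁⟩, a₂, ⟨hboth.2, hadj₂⟩, ha12⟩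
            omega
          rcases hone with h | h
          · exact ⟨f₁, fun _ => ⟨hf₁, q₁, hq₁,
              branch_path_avoids hG hconv hfV hq₁ (by rw [he₁]; simp) h⟩⟩
          · exact ⟨f₂, fun _ => ⟨hf₂, q₂, hq₂,
              branch_path_avoids hG hconv hfV hq₂ (by rw [he₂]; simp) h⟩⟩
      · exact ⟨f, fun h => absurd h hfF⟩
    choose sel hsel using hsel
    apply Set.ncard_le_ncard_of_injOn sel (fun f hf => (hsel f hf).1) ?_ (Set.toFinite _)
    intro g₁ hg₁ g₂ hg₂ heq
    by_contra hne
    obtain ⟨-, π₁, hπ₁, hav₁⟩ := hsel g₁ hg₁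
    obtain ⟨-, π₂, hπ₂, hav₂⟩ := hsel g₂ hg₂
    have hg₁V : g₁ ∈ Vstar := by rw [hFstar] at hg₁; exact hg₁.1
    have hg₂V : g₂ ∈ Vstar := by rw [hFstar] at hg₂; exact hg₂.1
    have hπ₂' : IsDiPath G.Adj g₂ (sel g₁) π₂ := by rw [heq]; exact hπ₂
    exact gate_unique hG hconv hg₁V hg₂V hne
      (dipath_reverse hsymm hπ₁) (dipath_reverse hsymm hπ₂')
      (fun x hx hxS => hav₁ x (List.mem_reverse.mp hx) hxS)
      (fun x hx hxS => hav₂ x (List.mem_reverse.mp hx) hxS)
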